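/- For every n ≥ 1, the flat application S_(2n+1) of S = λx.λy.λz. x z (y z) is βη-equivalent to λx.λy. x y (x y (… (x y (λz. x z (y z)))…)) with n occurrences of 'x y' applied; consequently the terms S_(2n+1) for distinct n are pairwise non-βη-equivalent, so S does not have the ρ-property. -/

import Mathlib

/-- Untyped lambda terms in de Bruijn representation. -/
inductive Lam where
  | var : Nat → Lam
  | app : Lam → Lam → Lam
  | lam : Lam → Lam
deriving DecidableEq

namespace Lam

/-- Lift (shift by one) all free variables with index ≥ `c`. -/
def lift (c : Nat) : Lam → Lam
  | var n => if n < c then var n else var (n + 1)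
  | app a b => app (lift c a) (lift c b)
  | lam a => lam (lift (c + 1) a)

/-- Substitute `s` for the free variable with index `d`. -/
def subst (d : Nat) (s : Lam) : Lam → Lam
  | var n => if n = d then s else if d < n then var (n - 1) else var n
  | app a b => app (subst d s a) (subst d s b)
  | lam a => lam (subst (d + 1) (lift 0 s) a)

/-- One-step βη-reduction (compatible closure of β and η). -/
inductive Step : Lam → Lam → Prop
  | beta (a b : Lam) : Step (app (lam a) b) (subst 0 b a)
  | eta (a : Lam) : Step (lam (app (lift 0 a) (var 0))) a
  | appL {a a' : Lam} (b : Lam) : Step a a' → Step (app a b) (app a' b)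
  | appR (a : Lam) {b b' : Lam} : Step b b' → Step (app a b) (app a b')
  | xi {a a' : Lam} : Step a a' → Step (lam a) (lam a')

/-- βη-equivalence: the equivalence relation generated by one-step βη-reduction. -/
def BetaEtaEq (a b : Lam) : Prop := Relation.EqvGen Step a b

/-- The B combinator λf.λg.λx. f (g x). -/
def B : Lam := lam (lam (lam (app (var 2) (app (var 1) (var 0)))))

/-- `flat X n` is the (n+1)-fold flat left application, i.e. `X_(n+1)`:
`flat X 0 = X = X_(1)` and `flat X (n+1) = (flat X n) X = X_(n+2)`. -/
def flat (X : Lam) : Nat → Lam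
  | 0 => X
  | n + 1 => app (flat X n) X

end Lam

open Lam

/-- The S combinator λx.λy.λz. x z (y z). -/
def S : Lam := lam (lam (lam (app (app (var 2) (var 0)) (app (var 1) (var 0)))))

/-- Body (under λx.λy., so x = var 1, y = var 0) of the normal form of S_(2n+1):
n-fold application of (x y) to λz. x z (y z). -/
def Sbody : ℕ → Lam
  | 0 => lam (app (app (var 2) (var 0)) (app (var 1) (var 0)))
  | n + 1 => app (app (var 1) (var 0)) (Sbody n)


namespace Lam

theorem lift_lift (t : Lam) : ∀ c c', c' ≤ c → lift (c+1) (lift c' t) = lift c' (lift c t) := by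
  induction t with
  | var n => intro c c' h; simp only [lift]; split_ifs <;> simp only [lift] <;>
      (try split_ifs) <;> first | rfl | omega | (congr 1; omega)
  | app a b iha ihb => intro c c' h; simp only [lift, iha _ _ h, ihb _ _ h]
  | lam a ih => intro c c' h; simp only [lift]; rw [ih (c+1) (c'+1) (by omega)]

theorem subst_lift (t : Lam) : ∀ d s, subst d s (lift d t) = t := by
  induction t with
  | var n => intro d s; simp only [lift]; split_ifs <;> simp only [subst] <;>
      (try split_ifs) <;> first | rfl | omega | (congr 1; omega)
  | app a b iha ihb => intro d s; simp only [lift, subst, iha, ihb]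
  | lam a ih => intro d s; simp only [lift, subst, ih]

theorem subst_lift_var (t : Lam) : ∀ d, subst d (var d) (lift (d+1) t) = t := by
  induction t with
  | var n => intro d; simp only [lift]; split_ifs <;> simp only [subst] <;>
      (try split_ifs) <;> first | rfl | omega | (congr 1; omega)
  | app a b iha ihb => intro d; simp only [lift, subst, iha, ihb]
  | lam a ih => intro d
                simp only [lift, subst]
                norm_num
                exact ih (d+1)

theorem lift_subst_low (t : Lam) : ∀ c d s, c ≤ d →
    lift c (subst d s t) = subst (d+1) (lift c s) (lift c t) := by
  induction t with
  | var n => intro c d s h; simp only [subst, lift]; split_ifs <;>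
      simp only [subst, lift] <;> (try split_ifs) <;> first | rfl | omega | (congr 1; omega)
  | app a b iha ihb => intro c d s h; simp only [subst, lift, iha _ _ _ h, ihb _ _ _ h]
  | lam a ih => intro c d s h
                simp only [subst, lift, ih _ _ _ (by omega : c+1 ≤ d+1)]
                rw [lift_lift s c 0 (by omega)]

theorem lift_subst_high (t : Lam) : ∀ c d s, d ≤ c →
    lift c (subst d s t) = subst d (lift c s) (lift (c+1) t) := by
  induction t with
  | var n => intro c d s h; simp only [subst, lift]; split_ifs <;>
      simp only [subst, lift] <;> (try split_ifs) <;> first | rfl | omega | (congr 1; omega)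
  | app a b iha ihb => intro c d s h; simp only [subst, lift, iha _ _ _ h, ihb _ _ _ h]
  | lam a ih => intro c d s h
                simp only [subst, lift, ih _ _ _ (by omega : d+1 ≤ c+1)]
                rw [lift_lift s c 0 (by omega)]

theorem subst_subst (t : Lam) : ∀ d e u v, e ≤ d →
    subst d v (subst e u t) = subst e (subst d v u) (subst (d+1) (lift e v) t) := by
  induction t with
  | var n => intro d e u v h; simp only [subst]; split_ifs <;>
      (try simp only [subst]) <;> (try split_ifs) <;>
      first | rfl | omega | (congr 1; omega) | (rw [subst_lift]) | simp_all
  | app a b iha ihb => intro d e u v h; simp only [subst, iha _ _ _ _ h, ihb _ _ _ _ h]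
  | lam a ih => intro d e u v h
                simp only [subst, ih _ _ _ _ (by omega : e+1 ≤ d+1)]
                rw [← lift_subst_low u 0 d v (by omega)]
                rw [lift_lift v e 0 (by omega)]

theorem lift_inj (c : Nat) : Function.Injective (lift c) := by
  intro a
  induction a generalizing c with
  | var n => intro b h; cases b <;> simp only [lift] at h <;> split_ifs at h <;>
      simp_all <;> omega
  | app a b iha ihb => intro t h; cases t <;> simp only [lift] at h <;> try (split_ifs at h)
                       all_goals simp_all
                       exact ⟨iha _ h.1, ihb _ h.2⟩
  | lam a ih => intro t h; cases t <;> simp only [lift] at h <;> try (split_ifs at h)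
                all_goals simp_all
                exact ih _ h

theorem lift_image {t x : Lam} : ∀ c c', c' ≤ c → lift (c+1) t = lift c' x →
    ∃ y, t = lift c' y ∧ x = lift c y := by
  induction t generalizing x with
  | var n =>
      intro c c' hcc h
      cases x with
      | var m =>
          simp only [lift] at h
          split_ifs at h with h1 h2 h2 <;> simp only [var.injEq] at h
          · subst h
            refine ⟨var n, ?_, ?_⟩ <;> simp only [lift] <;> rw [if_pos (by omega)]
          · refine ⟨var m, ?_, ?_⟩ <;> simp only [lift]
            · rw [if_neg (by omega)]; congr 1 <;> omega
            · rw [if_pos (by omega)]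
          · omega
          · refine ⟨var (n-1), ?_, ?_⟩ <;> simp only [lift]
            · rw [if_neg (by omega)]; congr 1 <;> omega
            · rw [if_neg (by omega)]; congr 1 <;> omega
      | app _ _ => simp only [lift] at h; split_ifs at h <;> simp_all
      | lam _ => simp only [lift] at h; split_ifs at h <;> simp_all
  | app a b iha ihb =>
      intro c c' hcc h
      cases x with
      | var m => simp only [lift] at h; split_ifs at h <;> simp_all
      | app xa xb =>
          simp only [lift, Lam.app.injEq] at h
          obtain ⟨ya, ha1, ha2⟩ := iha c c' hcc h.1
          obtain ⟨yb, hb1, hb2⟩ := ihb c c' hcc h.2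
          exact ⟨app ya yb, by simp [lift, ha1, hb1], by simp [lift, ha2, hb2]⟩
      | lam _ => simp only [lift] at h; simp_all
  | lam a ih =>
      intro c c' hcc h
      cases x with
      | var m => simp only [lift] at h; split_ifs at h <;> simp_all
      | app _ _ => simp only [lift] at h; simp_all
      | lam xa =>
          simp only [lift, Lam.lam.injEq] at h
          obtain ⟨y, h1, h2⟩ := ih (c+1) (c'+1) (by omega) h
          exact ⟨lam y, by simp [lift, h1], by simp [lift, h2]⟩



/-- β-only one-step reduction. -/
inductive StepB : Lam → Lam → Prop
  | beta (a b : Lam) : StepB (app (lam a) b) (subst 0 b a)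
  | appL {a a' : Lam} (b : Lam) : StepB a a' → StepB (app a b) (app a' b)
  | appR (a : Lam) {b b' : Lam} : StepB b b' → StepB (app a b) (app a b')
  | xi {a a' : Lam} : StepB a a' → StepB (lam a) (lam a')

/-- η-only one-step reduction. -/
inductive StepE : Lam → Lam → Prop
  | eta (a : Lam) : StepE (lam (app (lift 0 a) (var 0))) a
  | appL {a a' : Lam} (b : Lam) : StepE a a' → StepE (app a b) (app a' b)
  | appR (a : Lam) {b b' : Lam} : StepE b b' → StepE (app a b) (app a b')
  | xi {a a' : Lam} : StepE a a' → StepE (lam a) (lam a')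

/-- One-step βη-reduction (for the decomposition; mirrors `Step`). -/
inductive Step' : Lam → Lam → Prop
  | beta (a b : Lam) : Step' (app (lam a) b) (subst 0 b a)
  | eta (a : Lam) : Step' (lam (app (lift 0 a) (var 0))) a
  | appL {a a' : Lam} (b : Lam) : Step' a a' → Step' (app a b) (app a' b)
  | appR (a : Lam) {b b' : Lam} : Step' b b' → Step' (app a b) (app a b')
  | xi {a a' : Lam} : Step' a a' → Step' (lam a) (lam a')

theorem stepB_step' {a b : Lam} (h : StepB a b) : Step' a b := by
  induction h with
  | beta a b => exact Step'.beta a b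
  | appL b _ ih => exact Step'.appL b ih
  | appR a _ ih => exact Step'.appR a ih
  | xi _ ih => exact Step'.xi ih

theorem stepE_step' {a b : Lam} (h : StepE a b) : Step' a b := by
  induction h with
  | eta a => exact Step'.eta a
  | appL b _ ih => exact Step'.appL b ih
  | appR a _ ih => exact Step'.appR a ih
  | xi _ ih => exact Step'.xi ih

theorem step'_decomp {a b : Lam} (h : Step' a b) : StepB a b ∨ StepE a b := by
  induction h with
  | beta a b => exact Or.inl (StepB.beta a b)
  | eta a => exact Or.inr (StepE.eta a)
  | appL b _ ih => exact ih.imp (StepB.appL b) (StepE.appL b)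
  | appR a _ ih => exact ih.imp (StepB.appR a) (StepE.appR a)
  | xi _ ih => exact ih.imp StepB.xi StepE.xi

/-- Parallel β-reduction. -/
inductive Par : Lam → Lam → Prop
  | var (n : Nat) : Par (var n) (var n)
  | app {a a' b b' : Lam} : Par a a' → Par b b' → Par (app a b) (app a' b')
  | lam {a a' : Lam} : Par a a' → Par (lam a) (lam a')
  | beta {a a' b b' : Lam} : Par a a' → Par b b' → Par (app (lam a) b) (subst 0 b' a')

theorem par_refl (a : Lam) : Par a a := by
  induction a with
  | var n => exact Par.var n
  | app a b iha ihb => exact Par.app iha ihb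
  | lam a ih => exact Par.lam ih

theorem stepB_par {a b : Lam} (h : StepB a b) : Par a b := by
  induction h with
  | beta a b => exact Par.beta (par_refl a) (par_refl b)
  | appL b _ ih => exact Par.app ih (par_refl b)
  | appR a _ ih => exact Par.app (par_refl a) ih
  | xi _ ih => exact Par.lam ih

section RTGHelpers

open Relation

variable {R : Lam → Lam → Prop}

theorem rtg_appL (hL : ∀ (a a' b : Lam), R a a' → R (app a b) (app a' b))
    {a a' : Lam} (b : Lam) (h : ReflTransGen R a a') :
    ReflTransGen R (app a b) (app a' b) := by
  induction h with
  | refl => exact ReflTransGen.refl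
  | tail _ h ih => exact ih.tail (hL _ _ b h)

theorem rtg_appR (hR : ∀ (a b b' : Lam), R b b' → R (app a b) (app a b'))
    (a : Lam) {b b' : Lam} (h : ReflTransGen R b b') :
    ReflTransGen R (app a b) (app a b') := by
  induction h with
  | refl => exact ReflTransGen.refl
  | tail _ h ih => exact ih.tail (hR a _ _ h)

theorem rtg_xi (hX : ∀ (a a' : Lam), R a a' → R (lam a) (lam a'))
    {a a' : Lam} (h : ReflTransGen R a a') :
    ReflTransGen R (lam a) (lam a') := by
  induction h with
  | refl => exact ReflTransGen.refl
  | tail _ h ih => exact ih.tail (hX _ _ h)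

end RTGHelpers

open Relation

theorem par_rtgB {a b : Lam} (h : Par a b) : ReflTransGen StepB a b := by
  induction h with
  | var n => exact ReflTransGen.refl
  | app ha hb iha ihb =>
      exact (rtg_appL (fun _ _ b h => StepB.appL b h) _ iha).trans
        (rtg_appR (fun a _ _ h => StepB.appR a h) _ ihb)
  | lam _ ih => exact rtg_xi (fun _ _ h => StepB.xi h) ih
  | beta ha hb iha ihb =>
      refine ReflTransGen.tail ?_ (StepB.beta _ _)
      exact ((rtg_appL (fun _ _ b h => StepB.appL b h) _ (rtg_xi (fun _ _ h => StepB.xi h) iha)).trans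
        (rtg_appR (fun a _ _ h => StepB.appR a h) _ ihb))

theorem par_lift {a b : Lam} (h : Par a b) : ∀ c, Par (lift c a) (lift c b) := by
  induction h with
  | var n => intro c; simp only [lift]; split_ifs <;> exact par_refl _
  | app ha hb iha ihb => intro c; exact Par.app (iha c) (ihb c)
  | lam _ ih => intro c; exact Par.lam (ih (c+1))
  | beta ha hb iha ihb =>
      intro c
      simp only [lift]
      rw [lift_subst_high _ c 0 _ (by omega)]
      exact Par.beta (iha (c+1)) (ihb c)

theorem par_subst {t t' : Lam} (ht : Par t t') :
    ∀ (d : Nat) {s s' : Lam}, Par s s' → Par (subst d s t) (subst d s' t') := by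
  induction ht with
  | var n => intro d s s' hs; simp only [subst]; split_ifs <;> first | exact hs | exact par_refl _
  | app ha hb iha ihb => intro d s s' hs; exact Par.app (iha d hs) (ihb d hs)
  | lam _ ih => intro d s s' hs; exact Par.lam (ih (d+1) (par_lift hs 0))
  | beta ha hb iha ihb =>
      intro d s s' hs
      simp only [subst]
      rw [subst_subst _ d 0 _ _ (by omega)]
      exact Par.beta (iha (d+1) (par_lift hs 0)) (ihb d hs)

/-- Complete development. -/
def cd : Lam → Lam
  | var n => var n
  | lam a => lam (cd a)
  | app (lam a) b => subst 0 (cd b) (cd a)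
  | app (var n) b => app (var n) (cd b)
  | app (app a1 a2) b => app (cd (app a1 a2)) (cd b)

theorem par_lam_inv {p t : Lam} (h : Par (lam p) t) : ∃ p', t = lam p' ∧ Par p p' := by
  cases h with
  | lam hp => exact ⟨_, rfl, hp⟩

theorem par_cd {a b : Lam} (h : Par a b) : Par b (cd a) := by
  induction h with
  | var n => exact Par.var n
  | lam _ ih => exact Par.lam ih
  | app ha hb iha ihb =>
      rename_i a a' b b'
      cases a with
      | var n => cases ha; exact Par.app iha ihb
      | app a1 a2 => exact Par.app iha ihb
      | lam p =>
          obtain ⟨p', rfl, hp⟩ := par_lam_inv ha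
          obtain ⟨q', hq1, hq2⟩ := par_lam_inv iha
          simp only [cd]
          cases hq1
          exact Par.beta hq2 ihb
  | beta ha hb iha ihb =>
      simp only [cd]
      exact par_subst iha 0 ihb

theorem par_diamond {a b c : Lam} (h1 : Par a b) (h2 : Par a c) :
    ∃ d, Par b d ∧ Par c d :=
  ⟨cd a, par_cd h1, par_cd h2⟩

theorem rtgB_eq_rtgPar : ReflTransGen StepB = ReflTransGen Par := by
  funext a b
  apply propext
  constructor
  · exact fun h => ReflTransGen.mono (fun _ _ => stepB_par) _ _ h
  · intro h
    have : ReflTransGen (ReflTransGen StepB) a b :=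
      ReflTransGen.mono (fun _ _ => par_rtgB) _ _ h
    rwa [reflTransGen_idem] at this

/-- Confluence of β-reduction. -/
theorem confB {a b c : Lam} (h1 : ReflTransGen StepB a b) (h2 : ReflTransGen StepB a c) :
    ∃ d, ReflTransGen StepB b d ∧ ReflTransGen StepB c d := by
  rw [rtgB_eq_rtgPar] at h1 h2 ⊢
  have := Relation.church_rosser (r := Par) ?_ h1 h2
  · obtain ⟨d, hd1, hd2⟩ := this
    exact ⟨d, hd1, hd2⟩
  · intro a b c hab hac
    obtain ⟨d, h1, h2⟩ := par_diamond hab hac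
    exact ⟨d, ReflGen.single h1, ReflTransGen.single h2⟩

theorem stepE_lift {a b : Lam} (h : StepE a b) : ∀ c, StepE (lift c a) (lift c b) := by
  induction h with
  | eta a =>
      intro c
      have h0 : lift c (lam (app (lift 0 a) (var 0)))
          = lam (app (lift 0 (lift c a)) (var 0)) := by
        simp only [lift]
        rw [lift_lift a c 0 (by omega)]
        norm_num
      rw [h0]
      exact StepE.eta (lift c a)
  | appL b _ ih => intro c; exact StepE.appL _ (ih c)
  | appR a _ ih => intro c; exact StepE.appR _ (ih c)
  | xi _ ih => intro c; exact StepE.xi (ih (c+1))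

theorem stepB_lift {a b : Lam} (h : StepB a b) : ∀ c, StepB (lift c a) (lift c b) := by
  induction h with
  | beta a b =>
      intro c
      have h0 : lift c (subst 0 b a) = subst 0 (lift c b) (lift (c+1) a) :=
        lift_subst_high a c 0 b (by omega)
      rw [h0]
      exact StepB.beta _ _
  | appL b _ ih => intro c; exact StepB.appL _ (ih c)
  | appR a _ ih => intro c; exact StepB.appR _ (ih c)
  | xi _ ih => intro c; exact StepB.xi (ih (c+1))

theorem lift_var_zero_inv {c : Nat} {t : Lam} (h : lift (c+1) t = var 0) : t = var 0 := by
  cases t <;> simp only [lift] at h <;> try (split_ifs at h)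
  all_goals simp_all

theorem lift_lam_inv {c : Nat} {t m : Lam} (h : lift c t = lam m) :
    ∃ t₁, t = lam t₁ ∧ m = lift (c+1) t₁ := by
  cases t <;> simp only [lift] at h <;> try (split_ifs at h)
  all_goals simp_all

theorem stepE_lift_inv {t u : Lam} : ∀ c, StepE (lift c t) u →
    ∃ t', u = lift c t' ∧ StepE t t' := by
  induction t generalizing u with
  | var n => intro c h; simp only [lift] at h; split_ifs at h <;> cases h
  | app a b iha ihb =>
      intro c h
      simp only [lift] at h
      cases h with
      | appL _ h' => obtain ⟨a', rfl, ha⟩ := iha c h'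
                     exact ⟨app a' b, rfl, StepE.appL b ha⟩
      | appR _ h' => obtain ⟨b', rfl, hb⟩ := ihb c h'
                     exact ⟨app a b', rfl, StepE.appR a hb⟩
  | lam a ih =>
      intro c h
      simp only [lift] at h
      generalize hg : lift (c+1) a = w at h
      cases h with
      | xi h' => subst hg
                 obtain ⟨a', rfl, ha⟩ := ih (c+1) h'
                 exact ⟨lam a', rfl, StepE.xi ha⟩
      | eta =>
          have heq : lift (c+1) a = app (lift 0 u) (var 0) := hg
          cases a with
          | var n => simp only [lift] at heq; split_ifs at heq <;> cases heq
          | lam _ => simp only [lift] at heq; cases heq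
          | app a1 a2 =>
              simp only [lift, Lam.app.injEq] at heq
              obtain ⟨h1, h2⟩ := heq
              have ha2 : a2 = var 0 := lift_var_zero_inv h2
              obtain ⟨y, hy1, hy2⟩ := lift_image c 0 (by omega) h1
              subst ha2
              refine ⟨y, hy2, ?_⟩
              rw [hy1]
              exact StepE.eta y

theorem stepB_lift_inv {t u : Lam} : ∀ c, StepB (lift c t) u →
    ∃ t', u = lift c t' ∧ StepB t t' := by
  induction t generalizing u with
  | var n => intro c h; simp only [lift] at h; split_ifs at h <;> cases h
  | app a b iha ihb =>
      intro c h
      simp only [lift] at h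
      generalize hg : lift c a = w at h
      cases h with
      | appL _ h' => subst hg
                     obtain ⟨a', rfl, ha⟩ := iha c h'
                     exact ⟨app a' b, rfl, StepB.appL b ha⟩
      | appR _ h' => subst hg
                     obtain ⟨b', rfl, hb⟩ := ihb c h'
                     exact ⟨app a b', rfl, StepB.appR a hb⟩
      | beta p q =>
          obtain ⟨t₁, rfl, hp⟩ := lift_lam_inv hg
          refine ⟨subst 0 b t₁, ?_, StepB.beta t₁ b⟩
          rw [hp, lift_subst_high t₁ c 0 b (by omega)]
  | lam a ih =>
      intro c h
      simp only [lift] at h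
      cases h with
      | xi h' => obtain ⟨a', rfl, ha⟩ := ih (c+1) h'
                 exact ⟨lam a', rfl, StepB.xi ha⟩

theorem stepE_subst_left {t t' : Lam} (h : StepE t t') :
    ∀ d s, StepE (subst d s t) (subst d s t') := by
  induction h with
  | eta a =>
      intro d s
      have h0 : subst d s (lam (app (lift 0 a) (var 0)))
          = lam (app (lift 0 (subst d s a)) (var 0)) := by
        simp only [subst, lift]
        rw [← lift_subst_low a 0 d s (by omega)]
        norm_num
      rw [h0]
      exact StepE.eta _
  | appL b _ ih => intro d s; exact StepE.appL _ (ih d s)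
  | appR a _ ih => intro d s; exact StepE.appR _ (ih d s)
  | xi _ ih => intro d s; exact StepE.xi (ih (d+1) (lift 0 s))

theorem stepB_subst_left {t t' : Lam} (h : StepB t t') :
    ∀ d s, StepB (subst d s t) (subst d s t') := by
  induction h with
  | beta a b =>
      intro d s
      have h0 : subst d s (subst 0 b a)
          = subst 0 (subst d s b) (subst (d+1) (lift 0 s) a) :=
        subst_subst a d 0 b s (by omega)
      simp only [subst]
      rw [h0]
      exact StepB.beta _ _
  | appL b _ ih => intro d s; exact StepB.appL _ (ih d s)
  | appR a _ ih => intro d s; exact StepB.appR _ (ih d s)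
  | xi _ ih => intro d s; exact StepB.xi (ih (d+1) (lift 0 s))

theorem stepE_subst_right :
    ∀ (t : Lam) (d : Nat) {s s' : Lam}, StepE s s' →
      ReflTransGen StepE (subst d s t) (subst d s' t) := by
  intro t
  induction t with
  | var n => intro d s s' h; simp only [subst]; split_ifs <;>
      first | exact ReflTransGen.single h | exact ReflTransGen.refl
  | app a b iha ihb =>
      intro d s s' h
      exact (rtg_appL (fun _ _ b h => StepE.appL b h) _ (iha d h)).trans
        (rtg_appR (fun a _ _ h => StepE.appR a h) _ (ihb d h))
  | lam a ih =>
      intro d s s' h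
      exact rtg_xi (fun _ _ h => StepE.xi h) (ih (d+1) (stepE_lift h 0))

theorem stepB_subst_right :
    ∀ (t : Lam) (d : Nat) {s s' : Lam}, StepB s s' →
      ReflTransGen StepB (subst d s t) (subst d s' t) := by
  intro t
  induction t with
  | var n => intro d s s' h; simp only [subst]; split_ifs <;>
      first | exact ReflTransGen.single h | exact ReflTransGen.refl
  | app a b iha ihb =>
      intro d s s' h
      exact (rtg_appL (fun _ _ b h => StepB.appL b h) _ (iha d h)).trans
        (rtg_appR (fun a _ _ h => StepB.appR a h) _ (ihb d h))
  | lam a ih =>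
      intro d s s' h
      exact rtg_xi (fun _ _ h => StepB.xi h) (ih (d+1) (stepB_lift h 0))

theorem commE1 {a b : Lam} (h1 : StepE a b) : ∀ {c}, StepE a c →
    b = c ∨ ∃ d, StepE b d ∧ StepE c d := by
  induction h1 with
  | eta x =>
      intro c h2
      generalize hg : lift 0 x = w at h2
      cases h2 with
      | eta x' =>
          left
          exact lift_inj 0 hg
      | xi h' =>
          subst hg
          cases h' with
          | appL _ h'' =>
              obtain ⟨x₂, rfl, hx⟩ := stepE_lift_inv 0 h''
              exact Or.inr ⟨x₂, hx, StepE.eta x₂⟩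
          | appR _ h'' => cases h''
  | appL r h ih =>
      intro c h2
      cases h2 with
      | appL _ h2' =>
          rcases ih h2' with heq | ⟨d, hd1, hd2⟩
          · left; rw [heq]
          · exact Or.inr ⟨app d r, StepE.appL r hd1, StepE.appL r hd2⟩
      | appR _ h2' =>
          rename_i l' r'
          exact Or.inr ⟨app l' r', StepE.appR _ h2', StepE.appL _ h⟩
  | appR l h ih =>
      intro c h2
      cases h2 with
      | appR _ h2' =>
          rcases ih h2' with heq | ⟨d, hd1, hd2⟩
          · left; rw [heq]
          · exact Or.inr ⟨app l d, StepE.appR l hd1, StepE.appR l hd2⟩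
      | appL _ h2' =>
          rename_i r' l'
          exact Or.inr ⟨app l' r', StepE.appL _ h2', StepE.appR _ h⟩
  | xi h ih =>
      rename_i p p'
      intro c h2
      cases h2 with
      | xi h2' =>
          rcases ih h2' with heq | ⟨d, hd1, hd2⟩
          · left; rw [heq]
          · exact Or.inr ⟨lam d, StepE.xi hd1, StepE.xi hd2⟩
      | eta x =>
          cases h with
          | appL _ h'' =>
              obtain ⟨x₂, rfl, hx⟩ := stepE_lift_inv 0 h''
              exact Or.inr ⟨x₂, StepE.eta x₂, hx⟩
          | appR _ h'' => cases h''

theorem reflGen_appL {a a' : Lam} (b : Lam) (h : ReflGen StepB a a') :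
    ReflGen StepB (app a b) (app a' b) := by
  cases h with
  | refl => exact ReflGen.refl
  | single h => exact ReflGen.single (StepB.appL b h)

theorem reflGen_appR (a : Lam) {b b' : Lam} (h : ReflGen StepB b b') :
    ReflGen StepB (app a b) (app a b') := by
  cases h with
  | refl => exact ReflGen.refl
  | single h => exact ReflGen.single (StepB.appR a h)

theorem reflGen_xi {a a' : Lam} (h : ReflGen StepB a a') :
    ReflGen StepB (lam a) (lam a') := by
  cases h with
  | refl => exact ReflGen.refl
  | single h => exact ReflGen.single (StepB.xi h)

theorem comm1 {a b : Lam} (h1 : StepB a b) : ∀ {c}, StepE a c →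
    b = c ∨ ∃ d, ReflTransGen StepE b d ∧ ReflGen StepB c d := by
  induction h1 with
  | beta p q =>
      intro c h2
      cases h2 with
      | appL _ h' =>
          cases h' with
          | xi h'' =>
              rename_i p2
              exact Or.inr ⟨subst 0 q p2, ReflTransGen.single (stepE_subst_left h'' 0 q),
                ReflGen.single (StepB.beta p2 q)⟩
          | eta x =>
              left
              simp only [subst]
              rw [subst_lift]
              norm_num
      | appR _ h' =>
          rename_i q'
          exact Or.inr ⟨subst 0 q' p,
            stepE_subst_right p 0 h', ReflGen.single (StepB.beta p q')⟩
  | appL r h ih =>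
      intro c h2
      cases h2 with
      | appL _ h2' =>
          rcases ih h2' with heq | ⟨d, hd1, hd2⟩
          · left; rw [heq]
          · exact Or.inr ⟨app d r, rtg_appL (fun _ _ b h => StepE.appL b h) r hd1,
              reflGen_appL r hd2⟩
      | appR _ h2' =>
          rename_i l' r'
          exact Or.inr ⟨app l' r', ReflTransGen.single (StepE.appR _ h2'),
            ReflGen.single (StepB.appL _ h)⟩
  | appR l h ih =>
      intro c h2
      cases h2 with
      | appR _ h2' =>
          rcases ih h2' with heq | ⟨d, hd1, hd2⟩
          · left; rw [heq]
          · exact Or.inr ⟨app l d, rtg_appR (fun a _ _ h => StepE.appR a h) l hd1,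
              reflGen_appR l hd2⟩
      | appL _ h2' =>
          rename_i r' l'
          exact Or.inr ⟨app l' r', ReflTransGen.single (StepE.appL _ h2'),
            ReflGen.single (StepB.appR _ h)⟩
  | xi h ih =>
      rename_i p p'
      intro c h2
      cases h2 with
      | xi h2' =>
          rcases ih h2' with heq | ⟨d, hd1, hd2⟩
          · left; rw [heq]
          · exact Or.inr ⟨lam d, rtg_xi (fun _ _ h => StepE.xi h) hd1, reflGen_xi hd2⟩
      | eta =>
          generalize hg : lift 0 c = w at h
          cases h with
          | beta m q =>
              obtain ⟨x₁, rfl, hm⟩ := lift_lam_inv hg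
              left
              rw [hm, subst_lift_var]
          | appL _ h' =>
              rw [← hg] at h'
              obtain ⟨x₂, rfl, hx⟩ := stepB_lift_inv 0 h'
              exact Or.inr ⟨x₂, ReflTransGen.single (StepE.eta x₂), ReflGen.single hx⟩
          | appR _ h' => cases h'

theorem confE {a b c : Lam} (h1 : ReflTransGen StepE a b) (h2 : ReflTransGen StepE a c) :
    ∃ d, ReflTransGen StepE b d ∧ ReflTransGen StepE c d := by
  have := Relation.church_rosser (r := StepE) ?_ h1 h2
  · obtain ⟨d, hd1, hd2⟩ := this
    exact ⟨d, hd1, hd2⟩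
  · intro a b c hab hac
    rcases commE1 hab hac with rfl | ⟨d, hd1, hd2⟩
    · exact ⟨b, ReflGen.refl, ReflTransGen.refl⟩
    · exact ⟨d, ReflGen.single hd1, ReflTransGen.single hd2⟩

theorem comm_strip {a c : Lam} (hE : ReflTransGen StepE a c) :
    ∀ {b}, StepB a b → ∃ d, ReflTransGen StepE b d ∧ ReflGen StepB c d := by
  induction hE using ReflTransGen.head_induction_on with
  | refl => intro b hB; exact ⟨b, ReflTransGen.refl, ReflGen.single hB⟩
  | head hstep hrest ih =>
      intro b hB
      rcases comm1 hB hstep with rfl | ⟨d₁, hbd, hcd⟩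
      · exact ⟨_, hrest, ReflGen.refl⟩
      · cases hcd with
        | refl => exact ⟨_, hbd.trans hrest, ReflGen.refl⟩
        | single hstepB =>
            obtain ⟨d₂, h1, h2⟩ := ih hstepB
            exact ⟨d₂, hbd.trans h1, h2⟩

theorem comm_star {a b : Lam} (hB : ReflTransGen StepB a b) :
    ∀ {c}, ReflTransGen StepE a c → ∃ d, ReflTransGen StepE b d ∧ ReflTransGen StepB c d := by
  induction hB using ReflTransGen.head_induction_on with
  | refl => intro c hE; exact ⟨c, hE, ReflTransGen.refl⟩
  | head hstep hrest ih =>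
      intro c hE
      obtain ⟨d₁, h1, h2⟩ := comm_strip hE hstep
      obtain ⟨d, hd1, hd2⟩ := ih h1
      refine ⟨d, hd1, ?_⟩
      cases h2 with
      | refl => exact hd2
      | single h' => exact ReflTransGen.head h' hd2

/-- Composite relation: some β steps then some η steps. -/
def TRel (x y : Lam) : Prop := ∃ m, ReflTransGen StepB x m ∧ ReflTransGen StepE m y

theorem step'_TRel {x y : Lam} (h : Step' x y) : TRel x y := by
  rcases step'_decomp h with hB | hE
  · exact ⟨y, ReflTransGen.single hB, ReflTransGen.refl⟩
  · exact ⟨x, ReflTransGen.refl, ReflTransGen.single hE⟩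

theorem rtg_step'_eq_rtg_TRel : ReflTransGen Step' = ReflTransGen TRel := by
  funext a b
  apply propext
  constructor
  · exact fun h => ReflTransGen.mono (fun _ _ h' => step'_TRel h') _ _ h
  · intro h
    have : ReflTransGen (ReflTransGen Step') a b := by
      refine ReflTransGen.mono ?_ _ _ h
      rintro x y ⟨m, h1, h2⟩
      exact (ReflTransGen.mono (fun _ _ h' => stepB_step' h') _ _ h1).trans
        (ReflTransGen.mono (fun _ _ h' => stepE_step' h') _ _ h2)
    rwa [reflTransGen_idem] at this

theorem diamond_TRel {a b c : Lam} (h1 : TRel a b) (h2 : TRel a c) :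
    ∃ d, TRel b d ∧ TRel c d := by
  obtain ⟨x, hax, hxb⟩ := h1
  obtain ⟨y, hay, hyc⟩ := h2
  obtain ⟨z, hxz, hyz⟩ := confB hax hay
  obtain ⟨u, hzu, hbu⟩ := comm_star hxz hxb
  obtain ⟨v, hzv, hcv⟩ := comm_star hyz hyc
  obtain ⟨p, hup, hvp⟩ := confE hzu hzv
  exact ⟨p, ⟨u, hbu, hup⟩, ⟨v, hcv, hvp⟩⟩

/-- Confluence of βη-reduction. -/
theorem conf_step' {a b c : Lam} (h1 : ReflTransGen Step' a b) (h2 : ReflTransGen Step' a c) :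
    ∃ d, ReflTransGen Step' b d ∧ ReflTransGen Step' c d := by
  rw [rtg_step'_eq_rtg_TRel] at h1 h2 ⊢
  have := Relation.church_rosser (r := TRel) ?_ h1 h2
  · obtain ⟨d, hd1, hd2⟩ := this
    exact ⟨d, hd1, hd2⟩
  · intro a b c hab hac
    obtain ⟨d, hd1, hd2⟩ := diamond_TRel hab hac
    exact ⟨d, ReflGen.single hd1, ReflTransGen.single hd2⟩

theorem eqvGen_join {a b : Lam} (h : Relation.EqvGen Step' a b) :
    ∃ d, ReflTransGen Step' a d ∧ ReflTransGen Step' b d := by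
  induction h with
  | rel x y h => exact ⟨y, ReflTransGen.single h, ReflTransGen.refl⟩
  | refl x => exact ⟨x, ReflTransGen.refl, ReflTransGen.refl⟩
  | symm x y _ ih => obtain ⟨d, h1, h2⟩ := ih; exact ⟨d, h2, h1⟩
  | trans x y z _ _ ih1 ih2 =>
      obtain ⟨d₁, h1, h2⟩ := ih1
      obtain ⟨d₂, h3, h4⟩ := ih2
      obtain ⟨e, he1, he2⟩ := conf_step' h2 h3
      exact ⟨e, h1.trans he1, h4.trans he2⟩

/-- Normal form for βη. -/
def NF (t : Lam) : Prop := ∀ u, ¬ Step' t u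

theorem nf_rtg {a d : Lam} (h : NF a) (hr : ReflTransGen Step' a d) : a = d := by
  induction hr using ReflTransGen.head_induction_on with
  | refl => rfl
  | head hstep _ _ => exact absurd hstep (h _)

theorem nf_eqv_eq {a b : Lam} (ha : NF a) (hb : NF b) (h : Relation.EqvGen Step' a b) :
    a = b := by
  obtain ⟨d, h1, h2⟩ := eqvGen_join h
  rw [nf_rtg ha h1, nf_rtg hb h2]


theorem step_iff_step' {a b : Lam} : Step a b ↔ Step' a b := by
  constructor
  · intro h
    induction h with
    | beta a b => exact Step'.beta a b
    | eta a => exact Step'.eta a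
    | appL b _ ih => exact Step'.appL b ih
    | appR a _ ih => exact Step'.appR a ih
    | xi _ ih => exact Step'.xi ih
  · intro h
    induction h with
    | beta a b => exact Step.beta a b
    | eta a => exact Step.eta a
    | appL b _ ih => exact Step.appL b ih
    | appR a _ ih => exact Step.appR a ih
    | xi _ ih => exact Step.xi ih

theorem beq_iff {a b : Lam} : BetaEtaEq a b ↔ Relation.EqvGen Step' a b :=
  ⟨fun h => Relation.EqvGen.mono (fun _ _ h' => step_iff_step'.mp h') _ _ h,
   fun h => Relation.EqvGen.mono (fun _ _ h' => step_iff_step'.mpr h') _ _ h⟩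

theorem rtg_beq {a b : Lam} (h : ReflTransGen Step a b) : BetaEtaEq a b := by
  induction h with
  | refl => exact Relation.EqvGen.refl a
  | tail _ h' ih => exact Relation.EqvGen.trans _ _ _ ih (Relation.EqvGen.rel _ _ h')

theorem beq_symm {a b : Lam} (h : BetaEtaEq a b) : BetaEtaEq b a :=
  Relation.EqvGen.symm a b h

theorem beq_trans {a b c : Lam} (h1 : BetaEtaEq a b) (h2 : BetaEtaEq b c) : BetaEtaEq a c :=
  Relation.EqvGen.trans a b c h1 h2

theorem beq_appL {a a' : Lam} (b : Lam) (h : BetaEtaEq a a') :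
    BetaEtaEq (app a b) (app a' b) := by
  induction h with
  | rel x y h => exact Relation.EqvGen.rel _ _ (Step.appL b h)
  | refl x => exact Relation.EqvGen.refl _
  | symm x y _ ih => exact Relation.EqvGen.symm _ _ ih
  | trans x y z _ _ ih1 ih2 => exact Relation.EqvGen.trans _ _ _ ih1 ih2

theorem beq_appR (a : Lam) {b b' : Lam} (h : BetaEtaEq b b') :
    BetaEtaEq (app a b) (app a b') := by
  induction h with
  | rel x y h => exact Relation.EqvGen.rel _ _ (Step.appR a h)
  | refl x => exact Relation.EqvGen.refl _
  | symm x y _ ih => exact Relation.EqvGen.symm _ _ ih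
  | trans x y z _ _ ih1 ih2 => exact Relation.EqvGen.trans _ _ _ ih1 ih2

/-- All free variables of the term are < k. -/
def closed (k : Nat) : Lam → Prop
  | var n => n < k
  | app a b => closed k a ∧ closed k b
  | lam a => closed (k+1) a

theorem closed_mono {k k' : Nat} {t : Lam} (h : closed k t) (hk : k ≤ k') : closed k' t := by
  induction t generalizing k k' with
  | var n => simp only [closed] at *; omega
  | app a b iha ihb => exact ⟨iha h.1 hk, ihb h.2 hk⟩
  | lam a ih => exact ih h (by omega)

theorem closed_lift {k : Nat} {t : Lam} (h : closed k t) : lift k t = t := by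
  induction t generalizing k with
  | var n => simp only [closed] at h; simp [lift, h]
  | app a b iha ihb => simp only [lift]; rw [iha h.1, ihb h.2]
  | lam a ih => simp only [lift]; rw [ih h]

theorem closed_subst {k : Nat} {t : Lam} (h : closed k t) : ∀ s, subst k s t = t := by
  induction t generalizing k with
  | var n => intro s; simp only [closed] at h; simp only [subst]
             rw [if_neg (by omega), if_neg (by omega)]
  | app a b iha ihb => intro s; simp only [subst]; rw [iha h.1, ihb h.2]
  | lam a ih => intro s; simp only [subst]; rw [ih h]

end Lam

open Relation

theorem closed_S (k : Nat) : closed k S := by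
  simp only [S, closed]; omega

theorem lift_S (c : Nat) : lift c S = S := closed_lift (closed_S c)

theorem subst_S (d : Nat) (s : Lam) : subst d s S = S := closed_subst (closed_S d) s

theorem sbody_closed : ∀ n, closed 2 (Sbody n) := by
  intro n
  induction n with
  | zero => simp only [Sbody, closed]; omega
  | succ n ih => exact ⟨⟨by simp [closed], by simp [closed]⟩, ih⟩

theorem sbody_subst_var1 (n : ℕ) : subst 1 (var 1) (Sbody n) = Sbody n := by
  induction n with
  | zero => decide
  | succ n ih => simp only [Sbody, subst, ih]; norm_num

/-- S a b →β²  λz. (↑a) z ((↑b) z). -/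
theorem red_Sab (a b : Lam) : ReflTransGen Step (app (app S a) b)
    (lam (app (app (lift 0 a) (var 0)) (app (lift 0 b) (var 0)))) := by
  have e1 : subst 0 a (lam (lam (app (app (var 2) (var 0)) (app (var 1) (var 0)))))
      = lam (lam (app (app (lift 0 (lift 0 a)) (var 0)) (app (var 1) (var 0)))) := by
    simp [subst]
  have s1 : Step (app S a)
      (lam (lam (app (app (lift 0 (lift 0 a)) (var 0)) (app (var 1) (var 0))))) := by
    rw [← e1]; exact Step.beta _ a
  have e2 : subst 0 b (lam (app (app (lift 0 (lift 0 a)) (var 0)) (app (var 1) (var 0))))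
      = lam (app (app (lift 0 a) (var 0)) (app (lift 0 b) (var 0))) := by
    simp [subst]
    rw [← lift_lift a 0 0 (le_refl 0), subst_lift]
  have s2 : Step (app (lam (lam (app (app (lift 0 (lift 0 a)) (var 0)) (app (var 1) (var 0))))) b)
      (lam (app (app (lift 0 a) (var 0)) (app (lift 0 b) (var 0)))) := by
    rw [← e2]; exact Step.beta _ b
  exact ReflTransGen.head (Step.appL b s1) (ReflTransGen.single s2)

theorem g_comp_zero : subst 0 S (subst 1 S (Sbody 0))
    = lam (app (app S (var 0)) (app S (var 0))) := by decide

theorem g_comp_succ (n : ℕ) : subst 0 S (subst 1 S (Sbody (n+1)))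
    = app (app S S) (subst 0 S (subst 1 S (Sbody n))) := by
  simp [Sbody, subst, lift, S]

theorem g_equiv : ∀ n, BetaEtaEq (subst 0 S (subst 1 S (Sbody n))) (lam (lam (Sbody (n+1)))) := by
  intro n
  induction n with
  | zero =>
      rw [g_comp_zero]
      apply rtg_beq
      have r1 := red_Sab (var 0) (app S (var 0))
      have e1 : (lam (app (app (lift 0 (var 0)) (var 0)) (app (lift 0 (app S (var 0))) (var 0))))
          = lam (app (app (var 1) (var 0)) (app (app S (var 1)) (var 0))) := by decide
      rw [e1] at r1
      refine (rtg_xi (fun _ _ h => Step.xi h) r1).trans ?_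
      have r2 := red_Sab (var 1) (var 0)
      have e2 : (lam (app (app (lift 0 (var 1)) (var 0)) (app (lift 0 (var 0)) (var 0))))
          = Sbody 0 := by decide
      rw [e2] at r2
      exact rtg_xi (fun _ _ h => Step.xi h)
        (rtg_xi (fun _ _ h => Step.xi h)
          (rtg_appR (fun a _ _ h => Step.appR a h) _ r2))
  | succ n ih =>
      rw [g_comp_succ]
      refine beq_trans (beq_appR _ ih) ?_
      apply rtg_beq
      have r1 := red_Sab S (lam (lam (Sbody (n+1))))
      have hc : lift 0 (lam (lam (Sbody (n+1)))) = lam (lam (Sbody (n+1))) :=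
        closed_lift (sbody_closed (n+1))
      rw [lift_S, hc] at r1
      refine r1.trans ?_
      have s2 := Step.beta (lam (Sbody (n+1))) (var 0)
      have e2 : subst 0 (var 0) (lam (Sbody (n+1))) = lam (Sbody (n+1)) := by
        simp only [subst, lift]
        norm_num
        rw [sbody_subst_var1]
        try rfl
      rw [e2] at s2
      refine ReflTransGen.head (Step.xi (Step.appR _ s2)) ?_
      have r3 := red_Sab (var 0) (lam (Sbody (n+1)))
      have e3 : lift 0 (var 0) = var 1 := by decide
      have e4 : lift 0 (lam (Sbody (n+1))) = lam (lift 1 (Sbody (n+1))) := rfl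
      rw [e3, e4] at r3
      refine (rtg_xi (fun _ _ h => Step.xi h) r3).trans ?_
      have s4 := Step.beta (lift 1 (Sbody (n+1))) (var 0)
      have e5 : subst 0 (var 0) (lift 1 (Sbody (n+1))) = Sbody (n+1) :=
        subst_lift_var _ 0
      rw [e5] at s4
      exact ReflTransGen.single (Step.xi (Step.xi (Step.appR _ s4)))

theorem flat_equiv : ∀ n : ℕ, BetaEtaEq (flat S (2*n)) (lam (lam (Sbody n))) := by
  intro n
  induction n with
  | zero => exact Relation.EqvGen.refl _
  | succ n ih =>
      have e : flat S (2*(n+1)) = app (app (flat S (2*n)) S) S := by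
        have h2 : 2*(n+1) = (2*n) + 1 + 1 := by omega
        rw [h2]; rfl
      rw [e]
      refine beq_trans (beq_appL S (beq_appL S ih)) ?_
      refine beq_trans (rtg_beq ?_) (g_equiv n)
      have e1 : subst 0 S (lam (Sbody n)) = lam (subst 1 S (Sbody n)) := by
        simp only [subst, lift_S]
      have s1 := Step.beta (lam (Sbody n)) S
      rw [e1] at s1
      have s2 : Step (app (lam (subst 1 S (Sbody n))) S) (subst 0 S (subst 1 S (Sbody n))) :=
        Step.beta _ _
      exact ReflTransGen.head (Step.appL S s1) (ReflTransGen.single s2)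


namespace Lam

theorem step'_var_inv {n : Nat} {u : Lam} (h : Step' (var n) u) : False := by cases h

theorem step'_lam_inv {t u : Lam} (h : Step' (lam t) u) :
    (∃ t', u = lam t' ∧ Step' t t') ∨ t = app (lift 0 u) (var 0) := by
  cases h with
  | xi h' => exact Or.inl ⟨_, rfl, h'⟩
  | eta a => exact Or.inr rfl

theorem step'_app_inv {a b u : Lam} (h : Step' (app a b) u) :
    (∃ p, a = lam p ∧ u = subst 0 b p) ∨ (∃ a', u = app a' b ∧ Step' a a')
      ∨ (∃ b', u = app a b' ∧ Step' b b') := by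
  cases h with
  | beta p q => exact Or.inl ⟨p, rfl, rfl⟩
  | appL _ h' => exact Or.inr (Or.inl ⟨_, rfl, h'⟩)
  | appR _ h' => exact Or.inr (Or.inr ⟨_, rfl, h'⟩)

end Lam

theorem sbody_ne_var (n k : ℕ) : Sbody n ≠ var k := by
  cases n <;> simp [Sbody]

theorem nf_sbody : ∀ n, ∀ u, ¬ Step' (Sbody n) u := by
  intro n
  induction n with
  | zero =>
      intro u h
      rcases step'_lam_inv h with ⟨t', _, h'⟩ | heq
      · rcases step'_app_inv h' with ⟨p, hp, _⟩ | ⟨a', _, h''⟩ | ⟨b', _, h''⟩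
        · simp at hp
        · rcases step'_app_inv h'' with ⟨p, hp, _⟩ | ⟨_, _, h3⟩ | ⟨_, _, h3⟩
          · simp at hp
          · exact step'_var_inv h3
          · exact step'_var_inv h3
        · rcases step'_app_inv h'' with ⟨p, hp, _⟩ | ⟨_, _, h3⟩ | ⟨_, _, h3⟩
          · simp at hp
          · exact step'_var_inv h3
          · exact step'_var_inv h3
      · simp at heq
  | succ n ih =>
      intro u h
      rcases step'_app_inv h with ⟨p, hp, _⟩ | ⟨a', _, h'⟩ | ⟨b', _, h'⟩
      · simp at hp
      · rcases step'_app_inv h' with ⟨p, hp, _⟩ | ⟨_, _, h3⟩ | ⟨_, _, h3⟩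
        · simp at hp
        · exact step'_var_inv h3
        · exact step'_var_inv h3
      · exact ih _ h'

theorem nf_N (n : ℕ) : Lam.NF (lam (lam (Sbody n))) := by
  intro u h
  rcases step'_lam_inv h with ⟨t', _, h'⟩ | heq
  · rcases step'_lam_inv h' with ⟨t'', _, h''⟩ | heq2
    · exact nf_sbody n _ h''
    · cases n with
      | zero => simp [Sbody] at heq2
      | succ m =>
          simp only [Sbody] at heq2
          injection heq2 with h1 h2
          exact sbody_ne_var m 0 h2
  · simp at heq

theorem sbody_inj : ∀ {m n : ℕ}, Sbody m = Sbody n → m = n := by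
  intro m
  induction m with
  | zero => intro n h; cases n with
      | zero => rfl
      | succ k => simp [Sbody] at h
  | succ m ih =>
      intro n h
      cases n with
      | zero => simp [Sbody] at h
      | succ k => simp only [Sbody] at h; injection h with _ h2; rw [ih h2]

theorem distinct_lemma (m n : ℕ) (hne : m ≠ n) :
    ¬ BetaEtaEq (flat S (2*m)) (flat S (2*n)) := by
  intro hbe
  have e1 := flat_equiv m
  have e2 := flat_equiv n
  have h3 : BetaEtaEq (lam (lam (Sbody m))) (lam (lam (Sbody n))) :=
    beq_trans (beq_symm e1) (beq_trans hbe e2)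
  have h4 := nf_eqv_eq (nf_N m) (nf_N n) (beq_iff.mp h3)
  injection h4 with h5
  injection h5 with h6
  exact hne (sbody_inj h6)

theorem flat_shift {i j : ℕ} (h : BetaEtaEq (flat S i) (flat S j)) (t : ℕ) :
    BetaEtaEq (flat S (i+t)) (flat S (j+t)) := by
  induction t with
  | zero => exact h
  | succ t ih => exact beq_appL S ih

/-- For n ≥ 1, S_(2n+1) is βη-equivalent to λx.λy. (x y) ((x y) (… ((x y) (λz. x z (y z)))…))
with n occurrences of (x y); hence these terms are pairwise non-equivalent for distinct n,
so S does not have the ρ-property. (Here `flat S m = S_(m+1)`.) -/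
theorem stmt9 :
    (∀ n : ℕ, 1 ≤ n → BetaEtaEq (flat S (2 * n)) (lam (lam (Sbody n)))) ∧
    (∀ m n : ℕ, 1 ≤ m → 1 ≤ n → m ≠ n →
      ¬ BetaEtaEq (flat S (2 * m)) (flat S (2 * n))) ∧
    ¬ ∃ i j : ℕ, i ≠ j ∧ BetaEtaEq (flat S i) (flat S j) := by
  refine ⟨fun n _ => flat_equiv n, fun m n _ _ hne => distinct_lemma m n hne, ?_⟩
  suffices key : ∀ i j : ℕ, i < j → ¬ BetaEtaEq (flat S i) (flat S j) by
    rintro ⟨i, j, hne, h⟩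
    rcases Nat.lt_or_ge i j with hij | hij
    · exact key i j hij h
    · exact key j i (by omega) (beq_symm h)
  intro i j hij h
  have h1 := flat_shift h (i+2)
  have h2 := flat_shift h (j+2)
  have e : j+(i+2) = i+(j+2) := by omega
  rw [e] at h1
  have h3 := beq_trans h1 h2
  have em : i+(i+2) = 2*(i+1) := by omega
  have en : j+(j+2) = 2*(j+1) := by omega
  rw [em, en] at h3
  exact distinct_lemma (i+1) (j+1) (by omega) h3
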